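/- For every n ≥ 3, let A_n be the deterministic finite automaton with state set {0,1,…,n-1}, alphabet {a,b,c,d,e}, initial state 0, and final state set F equal to any non-empty subset of {1,…,n-1}, where a acts as the cycle (1,2,…,n-1) fixing 0, b acts as the transposition (1,2), c maps n-1 to 1 and fixes all other states, d maps n-1 to 0 and fixes all other states, and e maps every state to 1. Then A_n is minimal, and the language L = L(A_n) is a left ideal with quotient complexity n and syntactic complexity σ(L) = n^{n-1} + n - 1. -/

import Mathlib

/-- The left quotient of a language `L` by a word `w`: `{x | w ++ x ∈ L}`. -/
def leftQ {α : Type*} (L : Set (List α)) (w : List α) : Set (List α) :=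
  {x | w ++ x ∈ L}

/-- Quotient (state) complexity: the number of distinct left quotients of `L`. -/
noncomputable def quotCompl {α : Type*} (L : Set (List α)) : ℕ :=
  Nat.card (Set.range (leftQ L))

/-- The syntactic (Myhill) congruence of `L`. -/
def synRel {α : Type*} (L : Set (List α)) (x y : List α) : Prop :=
  ∀ u v : List α, u ++ x ++ v ∈ L ↔ u ++ y ++ v ∈ L

/-- The syntactic setoid on the free semigroup of non-empty words. -/
def synSetoid {α : Type*} (L : Set (List α)) : Setoid {w : List α // w ≠ []} :=
  ⟨fun x y => synRel L x.1 y.1,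
   ⟨fun _ _ _ => Iff.rfl, fun h u v => (h u v).symm,
    fun h₁ h₂ u v => (h₁ u v).trans (h₂ u v)⟩⟩

/-- Syntactic complexity: the cardinality of the syntactic semigroup of `L`. -/
noncomputable def synCompl {α : Type*} (L : Set (List α)) : ℕ :=
  Nat.card (Quotient (synSetoid L))

/-- `L` is a right ideal: it is non-empty and `L = LΣ*`. -/
def IsRightIdeal {α : Type*} (L : Set (List α)) : Prop :=
  L.Nonempty ∧ L = {x | ∃ u ∈ L, ∃ v : List α, x = u ++ v}

/-- `L` is a left ideal: it is non-empty and `L = Σ*L`. -/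
def IsLeftIdeal {α : Type*} (L : Set (List α)) : Prop :=
  L.Nonempty ∧ L = {x | ∃ u : List α, ∃ v ∈ L, x = u ++ v}

/-- `L` is a two-sided ideal: it is non-empty and `L = Σ*LΣ*`. -/
def IsTwoSidedIdeal {α : Type*} (L : Set (List α)) : Prop :=
  L.Nonempty ∧ L = {x | ∃ u : List α, ∃ w ∈ L, ∃ v : List α, x = u ++ w ++ v}

/-- The reverse of a language. -/
def langReverse {α : Type*} (L : Set (List α)) : Set (List α) :=
  List.reverse '' L

/-- A DFA is minimal: every state is reachable from the start state, and no two
distinct states accept the same set of words. -/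
def DFAMinimal {α σ : Type*} (M : DFA α σ) : Prop :=
  (∀ q : σ, ∃ w : List α, M.evalFrom M.start w = q) ∧
  ∀ p q : σ, (∀ w : List α, M.evalFrom p w ∈ M.accept ↔ M.evalFrom q w ∈ M.accept) → p = q

/-- The transition function of the automaton `𝒜_n` of Theorem 5 (left ideals):
`a = (1,2,…,n-1)` fixing `0`, `b = (1,2)`, `c : n-1 ↦ 1`, `d : n-1 ↦ 0`, and
`e` maps every state to `1`. -/
def step15 (n : ℕ) (hn : 3 ≤ n) : Fin n → Fin 5 → Fin n := fun q l =>
  if l.val = 0 then -- a : the cycle (1, 2, …, n-1), fixing 0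
    if q.val = 0 then q
    else if _h : q.val = n - 1 then ⟨1, by omega⟩
    else ⟨q.val + 1, by have := q.isLt; omega⟩
  else if l.val = 1 then -- b : the transposition (1, 2)
    if q.val = 1 then ⟨2, by omega⟩
    else if q.val = 2 then ⟨1, by omega⟩
    else q
  else if l.val = 2 then -- c : n-1 ↦ 1, fixing all other states
    if q.val = n - 1 then ⟨1, by omega⟩ else q
  else if l.val = 3 then -- d : n-1 ↦ 0, fixing all other states
    if q.val = n - 1 then ⟨0, by omega⟩ else q
  else -- e : the constant transformation sending every state to 1
    ⟨1, by omega⟩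


namespace Stmt15

variable {n : ℕ}

def zz (hn : 3 ≤ n) : Fin n := ⟨0, by omega⟩
def oo (hn : 3 ≤ n) : Fin n := ⟨1, by omega⟩
def tp (hn : 3 ≤ n) : Fin n := ⟨n - 1, by omega⟩

def La : Fin 5 := ⟨0, by omega⟩
def Lb : Fin 5 := ⟨1, by omega⟩
def Lc : Fin 5 := ⟨2, by omega⟩
def Ld : Fin 5 := ⟨3, by omega⟩
def Le : Fin 5 := ⟨4, by omega⟩

def tr (hn : 3 ≤ n) (w : List (Fin 5)) (q : Fin n) : Fin n :=
  w.foldl (step15 n hn) q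

lemma tr_nil (hn : 3 ≤ n) (q : Fin n) : tr hn [] q = q := rfl
lemma tr_cons (hn : 3 ≤ n) (l : Fin 5) (w : List (Fin 5)) (q : Fin n) :
    tr hn (l :: w) q = tr hn w (step15 n hn q l) := rfl
lemma tr_append (hn : 3 ≤ n) (u v : List (Fin 5)) (q : Fin n) :
    tr hn (u ++ v) q = tr hn v (tr hn u q) := by simp [tr]

lemma step_a_val (hn : 3 ≤ n) (q : Fin n) :
    (step15 n hn q La).val = if q.val = 0 then 0 else if q.val = n - 1 then 1 else q.val + 1 := by
  simp only [step15, La]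
  split_ifs <;> simp_all

lemma step_b_val (hn : 3 ≤ n) (q : Fin n) :
    (step15 n hn q Lb).val = if q.val = 1 then 2 else if q.val = 2 then 1 else q.val := by
  simp only [step15, Lb]
  split_ifs <;> simp_all

lemma step_c_val (hn : 3 ≤ n) (q : Fin n) :
    (step15 n hn q Lc).val = if q.val = n - 1 then 1 else q.val := by
  simp only [step15, Lc]
  split_ifs <;> simp_all

lemma step_d_val (hn : 3 ≤ n) (q : Fin n) :
    (step15 n hn q Ld).val = if q.val = n - 1 then 0 else q.val := by
  simp only [step15, Ld]
  split_ifs <;> simp_all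

lemma step_e_val (hn : 3 ≤ n) (q : Fin n) :
    (step15 n hn q Le).val = 1 := by
  simp only [step15, Le]
  split_ifs <;> simp_all

end Stmt15
namespace Stmt15

variable {n : ℕ}

/-- The `k`-th nonzero state on the `a`-cycle starting at `1`. -/
def AA (hn : 3 ≤ n) (k : ℕ) : Fin n :=
  ⟨1 + k % (n - 1), by have := Nat.mod_lt k (show 0 < n - 1 by omega); omega⟩

lemma AA_ne_zz (hn : 3 ≤ n) (k : ℕ) : AA hn k ≠ zz hn := by
  simp [AA, zz, Fin.ext_iff]

lemma AA_mod (hn : 3 ≤ n) (k : ℕ) : AA hn (k % (n - 1)) = AA hn k := by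
  simp [AA, Nat.mod_mod_of_dvd, Nat.mod_mod]

lemma AA_congr (hn : 3 ≤ n) {k₁ k₂ : ℕ} (h : k₁ % (n - 1) = k₂ % (n - 1)) :
    AA hn k₁ = AA hn k₂ := by
  apply Fin.ext; simp [AA, h]

lemma AA_val_sub_one (hn : 3 ≤ n) (k : ℕ) : (AA hn k).val - 1 = k % (n - 1) := by
  simp [AA]

lemma AA_of_ne (hn : 3 ≤ n) (q : Fin n) (hq : q ≠ zz hn) : AA hn (q.val - 1) = q := by
  have h1 : q.val ≠ 0 := by simpa [zz, Fin.ext_iff] using hq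
  have h2 : q.val < n := q.isLt
  apply Fin.ext
  simp only [AA]
  rw [Nat.mod_eq_of_lt (by omega)]
  omega

lemma step_a_AA (hn : 3 ≤ n) (k : ℕ) :
    step15 n hn (AA hn k) La = AA hn (k + 1) := by
  apply Fin.ext
  rw [step_a_val]
  have hk := Nat.mod_lt k (show 0 < n - 1 by omega)
  have h1 : (k + 1) % (n - 1) = (k % (n - 1) + 1) % (n - 1) := by
    conv_lhs => rw [← Nat.mod_add_mod]
  by_cases h : k % (n - 1) = n - 2
  · have : (k + 1) % (n - 1) = 0 := by
      rw [h1, h]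
      have : n - 2 + 1 = n - 1 := by omega
      rw [this, Nat.mod_self]
    simp only [AA, this]
    show (if 1 + k % (n - 1) = 0 then 0 else if 1 + k % (n - 1) = n - 1 then 1 else 1 + k % (n - 1) + 1) = 1 + 0
    rw [if_neg (by omega), if_pos (by omega)]
  · have : (k + 1) % (n - 1) = k % (n - 1) + 1 := by
      rw [h1, Nat.mod_eq_of_lt (by omega)]
    simp only [AA, this]
    show (if 1 + k % (n - 1) = 0 then 0 else if 1 + k % (n - 1) = n - 1 then 1 else 1 + k % (n - 1) + 1) = 1 + (k % (n - 1) + 1)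
    rw [if_neg (by omega), if_neg (by omega)]
    omega

lemma step_a_zz (hn : 3 ≤ n) : step15 n hn (zz hn) La = zz hn := by
  apply Fin.ext; rw [step_a_val]; simp [zz]

lemma tr_rep_a (hn : 3 ≤ n) (k : ℕ) (q : Fin n) :
    tr hn (List.replicate k La) q =
      if q = zz hn then zz hn else AA hn (q.val - 1 + k) := by
  induction k generalizing q with
  | zero =>
    rw [List.replicate_zero, tr_nil]
    split_ifs with h
    · exact h
    · exact (AA_of_ne hn q h).symm
  | succ k ih =>
    rw [List.replicate_succ, tr_cons, ih]
    by_cases h : q = zz hn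
    · rw [if_pos h, h, step_a_zz, if_pos rfl]
    · rw [if_neg h]
      have h2 := step_a_AA hn (q.val - 1)
      rw [AA_of_ne hn q h] at h2
      rw [h2, if_neg (AA_ne_zz hn _), AA_val_sub_one]
      apply AA_congr
      rw [Nat.mod_add_mod]
      congr 1
      omega

lemma tr_rep_a_id (hn : 3 ≤ n) : tr hn (List.replicate (n - 1) La) = id := by
  funext q
  rw [tr_rep_a]
  split_ifs with h
  · exact h.symm
  · rw [← AA_mod hn, Nat.add_mod_right, AA_mod, AA_of_ne hn q h]
    rfl

/-- The transition semigroup: transformations induced by non-empty words. -/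
def G (hn : 3 ≤ n) : Set (Fin n → Fin n) :=
  {f | ∃ w : List (Fin 5), w ≠ [] ∧ tr hn w = f}

lemma G_comp (hn : 3 ≤ n) {f g : Fin n → Fin n} (hf : f ∈ G hn) (hg : g ∈ G hn) :
    g ∘ f ∈ G hn := by
  obtain ⟨wf, hwf, rfl⟩ := hf
  obtain ⟨wg, hwg, rfl⟩ := hg
  exact ⟨wf ++ wg, by simp [hwf], by funext q; simp [tr_append]⟩

lemma G_letter (hn : 3 ≤ n) (l : Fin 5) : (fun q => step15 n hn q l) ∈ G hn :=
  ⟨[l], by simp, rfl⟩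

lemma G_id (hn : 3 ≤ n) : id ∈ G hn :=
  ⟨List.replicate (n - 1) La, by simp; omega, tr_rep_a_id hn⟩

end Stmt15
namespace Stmt15

variable {n : ℕ}

/-- The rotation `a` as a permutation. -/
def pa (hn : 3 ≤ n) : Equiv.Perm (Fin n) where
  toFun q := step15 n hn q La
  invFun := tr hn (List.replicate (n - 2) La)
  left_inv q := by
    have : tr hn ([La] ++ List.replicate (n - 2) La) q = q := by
      have he : [La] ++ List.replicate (n - 2) La = List.replicate (n - 1) La := by
        show La :: List.replicate (n - 2) La = _
        rw [← List.replicate_succ]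
        congr 1
        omega
      rw [he, tr_rep_a_id]; rfl
    rw [tr_append] at this
    simpa [tr_cons, tr_nil] using this
  right_inv q := by
    have : tr hn (List.replicate (n - 2) La ++ [La]) q = q := by
      have he : List.replicate (n - 2) La ++ [La] = List.replicate (n - 1) La := by
        rw [← List.replicate_succ']
        congr 1
        omega
      rw [he, tr_rep_a_id]; rfl
    rw [tr_append] at this
    simpa [tr_cons, tr_nil] using this

lemma pa_apply (hn : 3 ≤ n) (q : Fin n) : pa hn q = step15 n hn q La := rfl

lemma pa_pow_coe (hn : 3 ≤ n) (k : ℕ) :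
    ⇑(pa hn ^ k) = tr hn (List.replicate k La) := by
  induction k with
  | zero => funext q; simp [tr_nil]
  | succ k ih =>
    funext q
    rw [pow_succ', List.replicate_succ', tr_append, ← ih, Equiv.Perm.mul_apply]
    rfl

lemma pa_pow_AA (hn : 3 ≤ n) (k m : ℕ) : (pa hn ^ k) (AA hn m) = AA hn (m + k) := by
  rw [pa_pow_coe, tr_rep_a, if_neg (AA_ne_zz hn m), AA_val_sub_one]
  apply AA_congr
  rw [Nat.mod_add_mod]

lemma pa_pow_coe_G (hn : 3 ≤ n) (k : ℕ) : ⇑(pa hn ^ k) ∈ G hn := by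
  rcases Nat.eq_zero_or_pos k with h | h
  · subst h; simpa using G_id hn
  · exact ⟨List.replicate k La, by simp; omega, (pa_pow_coe hn k).symm⟩

lemma pa_pow_inv_coe_G (hn : 3 ≤ n) (k : ℕ) : ⇑((pa hn ^ k)⁻¹) ∈ G hn := by
  have hord : pa hn ^ (n - 1) = 1 := by
    ext q
    rw [Equiv.Perm.one_apply, pa_pow_coe, tr_rep_a_id]; rfl
  have : (pa hn ^ k)⁻¹ = pa hn ^ (k * (n - 2)) := by
    rw [inv_eq_iff_mul_eq_one, ← pow_add]
    have h2 : k + k * (n - 2) = k * (n - 1) := by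
      rw [show n - 1 = n - 2 + 1 by omega, Nat.mul_add, Nat.mul_one, Nat.add_comm]
    rw [h2, mul_comm, pow_mul, hord, one_pow]
  rw [this]
  exact pa_pow_coe_G hn _

/-- `b` is the swap of `1 = AA 0` and `2 = AA 1`. -/
lemma swap_AA01 (hn : 3 ≤ n) :
    ⇑(Equiv.swap (AA hn 0) (AA hn 1)) = (fun q => step15 n hn q Lb) := by
  have h0 : (AA hn 0).val = 1 := by simp [AA]
  have h1 : (AA hn 1).val = 2 := by
    simp [AA]; rw [Nat.mod_eq_of_lt (by omega)]
  funext q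
  rw [Equiv.swap_apply_def]
  apply Fin.ext
  rw [step_b_val]
  by_cases hq0 : q = AA hn 0
  · rw [if_pos hq0, hq0, h0, h1]; simp
  · rw [if_neg hq0]
    by_cases hq1 : q = AA hn 1
    · rw [if_pos hq1, hq1, h1, h0]
      rw [if_neg (by omega)]
      simp
    · rw [if_neg hq1]
      have hv0 : q.val ≠ 1 := fun h => hq0 (Fin.ext (by rw [h0, h]))
      have hv1 : q.val ≠ 2 := fun h => hq1 (Fin.ext (by rw [h1, h]))
      rw [if_neg hv0, if_neg hv1]

lemma swap_AA_adj_G (hn : 3 ≤ n) (k : ℕ) :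
    ⇑(Equiv.swap (AA hn k) (AA hn (k + 1))) ∈ G hn := by
  have h : Equiv.swap (AA hn k) (AA hn (k + 1)) =
      pa hn ^ k * Equiv.swap (AA hn 0) (AA hn 1) * (pa hn ^ k)⁻¹ := by
    rw [← Equiv.swap_apply_apply, pa_pow_AA, pa_pow_AA, Nat.zero_add,
      Nat.add_comm 1 k]
  rw [h]
  have : ⇑(pa hn ^ k * Equiv.swap (AA hn 0) (AA hn 1) * (pa hn ^ k)⁻¹) =
      ⇑(pa hn ^ k) ∘ (⇑(Equiv.swap (AA hn 0) (AA hn 1)) ∘ ⇑((pa hn ^ k)⁻¹)) := by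
    rfl
  rw [this]
  apply G_comp hn (G_comp hn (pa_pow_inv_coe_G hn k) _) (pa_pow_coe_G hn k)
  rw [swap_AA01 hn]
  exact G_letter hn Lb

lemma swap_AA_G (hn : 3 ≤ n) (m k : ℕ) :
    ⇑(Equiv.swap (AA hn k) (AA hn (k + m))) ∈ G hn := by
  induction m generalizing k with
  | zero => simpa [Equiv.swap_self] using G_id hn
  | succ m ih =>
    by_cases hxt : AA hn k = AA hn (k + m + 1)
    · rw [show k + (m+1) = k + m + 1 from rfl, ← hxt]
      simpa [Equiv.swap_self] using G_id hn
    · by_cases hxy : AA hn k = AA hn (k + m)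
      · rw [show k + (m+1) = k + m + 1 from rfl, hxy]
        exact swap_AA_adj_G hn (k + m)
      · have key : Equiv.swap (AA hn k) (AA hn (k + (m+1))) =
            Equiv.swap (AA hn (k+m)) (AA hn (k+m+1)) *
              Equiv.swap (AA hn k) (AA hn (k+m)) *
              (Equiv.swap (AA hn (k+m)) (AA hn (k+m+1)))⁻¹ := by
          rw [← Equiv.swap_apply_apply]
          rw [Equiv.swap_apply_of_ne_of_ne hxy hxt, Equiv.swap_apply_left]
          rfl
        rw [key, Equiv.swap_inv]
        have : ⇑(Equiv.swap (AA hn (k+m)) (AA hn (k+m+1)) *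
              Equiv.swap (AA hn k) (AA hn (k+m)) *
              Equiv.swap (AA hn (k+m)) (AA hn (k+m+1))) =
            ⇑(Equiv.swap (AA hn (k+m)) (AA hn (k+m+1))) ∘
              (⇑(Equiv.swap (AA hn k) (AA hn (k+m))) ∘
                ⇑(Equiv.swap (AA hn (k+m)) (AA hn (k+m+1)))) := rfl
        rw [this]
        exact G_comp hn (G_comp hn (swap_AA_adj_G hn _) (ih k)) (swap_AA_adj_G hn _)

lemma swap_G (hn : 3 ≤ n) (i j : Fin n) (hi : i ≠ zz hn) (hj : j ≠ zz hn) :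
    ⇑(Equiv.swap i j) ∈ G hn := by
  rcases le_total (i.val - 1) (j.val - 1) with h | h
  · have := swap_AA_G hn (j.val - 1 - (i.val - 1)) (i.val - 1)
    rwa [show i.val - 1 + (j.val - 1 - (i.val - 1)) = j.val - 1 by omega,
      AA_of_ne hn i hi, AA_of_ne hn j hj] at this
  · have := swap_AA_G hn (i.val - 1 - (j.val - 1)) (j.val - 1)
    rwa [show j.val - 1 + (i.val - 1 - (j.val - 1)) = i.val - 1 by omega,
      AA_of_ne hn j hj, AA_of_ne hn i hi, Equiv.swap_comm] at this

/-- Every permutation fixing `0` is in the transition semigroup. -/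
lemma perm_G (hn : 3 ≤ n) : ∀ m (σ : Equiv.Perm (Fin n)),
    σ.support.card ≤ m → σ (zz hn) = zz hn → ⇑σ ∈ G hn := by
  intro m
  induction m with
  | zero =>
    intro σ hc _
    have : σ = 1 := by
      rw [← Equiv.Perm.card_support_eq_zero]
      omega
    rw [this]
    simpa using G_id hn
  | succ m ih =>
    intro σ hc h0
    by_cases h1 : σ = 1
    · rw [h1]; simpa using G_id hn
    · obtain ⟨x, hx⟩ : ∃ x, σ x ≠ x := by
        by_contra hcon
        push_neg at hcon
        exact h1 (Equiv.ext hcon)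
      have hxz : x ≠ zz hn := fun h => hx (by rw [h, h0])
      have hsxz : σ x ≠ zz hn := fun h => hx (by
        have : σ x = σ (zz hn) := by rw [h0, h]
        rw [σ.injective this] at h ⊢
        exact h0)
      set τ := Equiv.swap x (σ x) * σ with hτ
      have hτ0 : τ (zz hn) = zz hn := by
        rw [hτ, Equiv.Perm.mul_apply, h0,
          Equiv.swap_apply_of_ne_of_ne (Ne.symm hxz) (Ne.symm hsxz)]
      have hτc : τ.support.card ≤ m := by
        have h := Equiv.Perm.card_support_swap_mul hx
        rw [← hτ] at h
        omega
      have hστ : σ = Equiv.swap x (σ x) * τ := by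
        rw [hτ, ← mul_assoc, Equiv.swap_mul_self, one_mul]
      rw [hστ]
      have : ⇑(Equiv.swap x (σ x) * τ) = ⇑(Equiv.swap x (σ x)) ∘ ⇑τ := rfl
      rw [this]
      exact G_comp hn (ih τ hτc hτ0) (swap_G hn x (σ x) hxz hsxz)

lemma perm_G' (hn : 3 ≤ n) (σ : Equiv.Perm (Fin n)) (h0 : σ (zz hn) = zz hn) :
    ⇑σ ∈ G hn :=
  perm_G hn σ.support.card σ le_rfl h0

end Stmt15
namespace Stmt15

variable {n : ℕ}

lemma tp_ne_zz (hn : 3 ≤ n) : tp hn ≠ zz hn := by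
  simp [tp, zz, Fin.ext_iff]; omega

lemma oo_ne_zz (hn : 3 ≤ n) : oo hn ≠ zz hn := by
  simp [oo, zz, Fin.ext_iff]

lemma oo_ne_tp (hn : 3 ≤ n) : oo hn ≠ tp hn := by
  simp [oo, tp, Fin.ext_iff]; omega

lemma step_d_of_ne (hn : 3 ≤ n) (q : Fin n) (h : q ≠ tp hn) :
    step15 n hn q Ld = q := by
  apply Fin.ext
  rw [step_d_val, if_neg (by simpa [tp, Fin.ext_iff] using h)]

lemma step_d_tp (hn : 3 ≤ n) : step15 n hn (tp hn) Ld = zz hn := by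
  apply Fin.ext
  rw [step_d_val, if_pos (by simp [tp])]
  rfl

lemma step_c_of_ne (hn : 3 ≤ n) (q : Fin n) (h : q ≠ tp hn) :
    step15 n hn q Lc = q := by
  apply Fin.ext
  rw [step_c_val, if_neg (by simpa [tp, Fin.ext_iff] using h)]

lemma step_c_tp (hn : 3 ≤ n) : step15 n hn (tp hn) Lc = oo hn := by
  apply Fin.ext
  rw [step_c_val, if_pos (by simp [tp])]
  rfl

lemma step_e_eq (hn : 3 ≤ n) (q : Fin n) : step15 n hn q Le = oo hn := by
  apply Fin.ext
  rw [step_e_val]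
  rfl

/-- Any set of nonzero states can be collapsed to `0` injectively on the rest. -/
lemma killG (hn : 3 ≤ n) : ∀ S : Finset (Fin n), zz hn ∉ S →
    ∃ g ∈ G hn, g (zz hn) = zz hn ∧ (∀ s ∈ S, g s = zz hn) ∧
      (∀ x, x ∉ S → x ≠ zz hn → g x ≠ zz hn) ∧
      Set.InjOn g {x | x ∉ S ∧ x ≠ zz hn} := by
  intro S
  induction S using Finset.induction_on with
  | empty =>
    intro _
    exact ⟨id, G_id hn, rfl, by simp, fun x _ h => h, fun x _ y _ h => h⟩
  | @insert s S hsS ih =>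
    intro hzz
    obtain ⟨g', hg'G, hg'0, hg'S, hg'nz, hg'inj⟩ :=
      ih (fun h => hzz (Finset.mem_insert_of_mem h))
    have hs_ne : s ≠ zz hn := by
      rintro rfl; exact hzz (Finset.mem_insert_self _ _)
    have hy : g' s ≠ zz hn := hg'nz s hsS hs_ne
    set y := g' s with hy_def
    set τ := Equiv.swap y (tp hn) with hτ_def
    have hτG : ⇑τ ∈ G hn := swap_G hn y (tp hn) hy (tp_ne_zz hn)
    have hτz : τ (zz hn) = zz hn :=
      Equiv.swap_apply_of_ne_of_ne (Ne.symm hy) (Ne.symm (tp_ne_zz hn))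
    set fd := fun q : Fin n => step15 n hn q Ld with hfd_def
    refine ⟨fd ∘ (⇑τ ∘ g'), G_comp hn (G_comp hn hg'G hτG) (G_letter hn Ld),
      ?_, ?_, ?_, ?_⟩
    · show fd (τ (g' (zz hn))) = zz hn
      rw [hg'0, hτz]
      exact step_d_of_ne hn _ (Ne.symm (tp_ne_zz hn))
    · intro s' hs'
      rcases Finset.mem_insert.mp hs' with h | h
      · subst h
        show fd (τ (g' s')) = zz hn
        rw [← hy_def, Equiv.swap_apply_left]
        exact step_d_tp hn
      · show fd (τ (g' s')) = zz hn
        rw [hg'S s' h, hτz]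
        exact step_d_of_ne hn _ (Ne.symm (tp_ne_zz hn))
    · intro x hx hxz
      have hxs : x ≠ s := fun h => hx (h ▸ Finset.mem_insert_self _ _)
      have hxS : x ∉ S := fun h => hx (Finset.mem_insert_of_mem h)
      have hyx : g' x ≠ zz hn := hg'nz x hxS hxz
      have h1 : τ (g' x) ≠ zz hn := by
        intro h
        exact hyx (τ.injective (h.trans hτz.symm))
      have h2 : τ (g' x) ≠ tp hn := by
        intro h
        have : τ (g' x) = τ y := by rw [h, hτ_def, Equiv.swap_apply_left]
        have : g' x = y := τ.injective this
        exact hxs (hg'inj ⟨hxS, hxz⟩ ⟨hsS, hs_ne⟩ this)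
      show step15 n hn (τ (g' x)) Ld ≠ zz hn
      rw [step_d_of_ne hn _ h2]
      exact h1
    · intro x₁ hx₁ x₂ hx₂ heq
      obtain ⟨hx₁i, hx₁z⟩ := hx₁
      obtain ⟨hx₂i, hx₂z⟩ := hx₂
      have hx₁s : x₁ ≠ s := fun h => hx₁i (h ▸ Finset.mem_insert_self _ _)
      have hx₂s : x₂ ≠ s := fun h => hx₂i (h ▸ Finset.mem_insert_self _ _)
      have hx₁S : x₁ ∉ S := fun h => hx₁i (Finset.mem_insert_of_mem h)
      have hx₂S : x₂ ∉ S := fun h => hx₂i (Finset.mem_insert_of_mem h)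
      have key : ∀ x, x ∉ S → x ≠ zz hn → x ≠ s → τ (g' x) ≠ tp hn := by
        intro x hxS hxz hxs h
        have : τ (g' x) = τ y := by rw [h, hτ_def, Equiv.swap_apply_left]
        have : g' x = y := τ.injective this
        exact hxs (hg'inj ⟨hxS, hxz⟩ ⟨hsS, hs_ne⟩ this)
      have heq' : τ (g' x₁) = τ (g' x₂) := by
        have e1 : fd (τ (g' x₁)) = τ (g' x₁) :=
          step_d_of_ne hn _ (key x₁ hx₁S hx₁z hx₁s)
        have e2 : fd (τ (g' x₂)) = τ (g' x₂) :=
          step_d_of_ne hn _ (key x₂ hx₂S hx₂z hx₂s)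
        have := heq
        simp only [Function.comp_apply] at this
        rw [e1, e2] at this
        exact this
      exact hg'inj ⟨hx₁S, hx₁z⟩ ⟨hx₂S, hx₂z⟩ (τ.injective heq')

lemma surjG (hn : 3 ≤ n) (t : Fin n → Fin n) (h0 : t (zz hn) = zz hn)
    (hs : Function.Surjective t) : t ∈ G hn := by
  have hinj : Function.Injective t := Finite.injective_iff_surjective.mpr hs
  have := perm_G' hn (Equiv.ofBijective t ⟨hinj, hs⟩) h0
  exact this

/-- The deficiency measure: nonzero states missed by `t`. -/
def miss (hn : 3 ≤ n) (t : Fin n → Fin n) : Finset (Fin n) :=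
  Finset.univ.filter (fun x : Fin n => x ≠ zz hn ∧ x ∉ Finset.image t Finset.univ)

lemma fullG_aux (hn : 3 ≤ n) : ∀ m, ∀ t : Fin n → Fin n, t (zz hn) = zz hn →
    (∀ q, q ≠ zz hn → t q ≠ zz hn) → (miss hn t).card ≤ m → t ∈ G hn := by
  have surj_case : ∀ t : Fin n → Fin n, t (zz hn) = zz hn →
      (miss hn t).card = 0 → t ∈ G hn := by
    intro t h0 hcard
    apply surjG hn t h0
    intro y
    by_cases hy : y = zz hn
    · exact ⟨zz hn, hy ▸ h0⟩
    · have : y ∉ miss hn t := by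
        rw [Finset.card_eq_zero.mp hcard]
        exact Finset.notMem_empty y
      simp only [miss, Finset.mem_filter, Finset.mem_univ, true_and, not_and,
        not_not] at this
      obtain ⟨x, _, hx⟩ := Finset.mem_image.mp (this hy)
      exact ⟨x, hx⟩
  intro m
  induction m with
  | zero => intro t h0 _ hc; exact surj_case t h0 (Nat.le_zero.mp hc)
  | succ m ih =>
    intro t h0 hnz hc
    by_cases hzero : (miss hn t).card = 0
    · exact surj_case t h0 hzero
    · obtain ⟨m₀, hm₀⟩ := Finset.card_pos.mp (Nat.pos_of_ne_zero hzero)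
      simp only [miss, Finset.mem_filter, Finset.mem_univ, true_and] at hm₀
      obtain ⟨hm₀z, hm₀i⟩ := hm₀
      have hninj : ¬ Function.Injective t := by
        intro hinj
        obtain ⟨x, hx⟩ := Finite.injective_iff_surjective.mp hinj m₀
        exact hm₀i (Finset.mem_image.mpr ⟨x, Finset.mem_univ x, hx⟩)
      obtain ⟨p, q, hpq_eq, hpq_ne⟩ := Function.not_injective_iff.mp hninj
      have hq_ne : q ≠ zz hn := by
        rintro rfl
        exact hnz p hpq_ne (hpq_eq.trans h0)
      have hp_ne : p ≠ zz hn := by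
        rintro rfl
        exact hnz q (Ne.symm hpq_ne) (hpq_eq.symm.trans h0)
      set p' := Equiv.swap q (tp hn) p with hp'_def
      have hp'_cases : p' = p ∨ p' = q := by
        by_cases h1 : p = tp hn
        · right; rw [hp'_def, h1, Equiv.swap_apply_right]
        · left; rw [hp'_def, Equiv.swap_apply_of_ne_of_ne hpq_ne h1]
      have hp'_ne_tp : p' ≠ tp hn := by
        by_cases h1 : p = tp hn
        · rw [hp'_def, h1, Equiv.swap_apply_right]
          intro h; exact hpq_ne (h1.trans h.symm)
        · rw [hp'_def, Equiv.swap_apply_of_ne_of_ne hpq_ne h1]; exact h1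
      have hp'_ne_zz : p' ≠ zz hn := by
        rcases hp'_cases with h | h
        · rw [h]; exact hp_ne
        · rw [h]; exact hq_ne
      set π := Equiv.swap p' (oo hn) * Equiv.swap q (tp hn) with hπ_def
      have hπq : π q = tp hn := by
        rw [hπ_def, Equiv.Perm.mul_apply, Equiv.swap_apply_left,
          Equiv.swap_apply_of_ne_of_ne (Ne.symm hp'_ne_tp)
            (Ne.symm (oo_ne_tp hn))]
      have hπp : π p = oo hn := by
        rw [hπ_def, Equiv.Perm.mul_apply, ← hp'_def, Equiv.swap_apply_left]
      have hπz : π (zz hn) = zz hn := by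
        rw [hπ_def, Equiv.Perm.mul_apply,
          Equiv.swap_apply_of_ne_of_ne (Ne.symm hq_ne) (Ne.symm (tp_ne_zz hn)),
          Equiv.swap_apply_of_ne_of_ne (Ne.symm hp'_ne_zz)
            (Ne.symm (oo_ne_zz hn))]
      have hπG : ⇑π ∈ G hn := perm_G' hn π hπz
      have hπinvz : π⁻¹ (zz hn) = zz hn := by
        conv_lhs => rw [← hπz]
        rw [Equiv.Perm.inv_def, Equiv.symm_apply_apply]
      have hπinvG : ⇑π⁻¹ ∈ G hn := perm_G' hn π⁻¹ hπinvz
      set u := ⇑π⁻¹ ∘ ((fun x => step15 n hn x Lc) ∘ ⇑π) with hu_def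
      have huG : u ∈ G hn :=
        G_comp hn (G_comp hn hπG (G_letter hn Lc)) hπinvG
      have hu_q : u q = p := by
        simp only [hu_def, Function.comp_apply]
        rw [hπq, step_c_tp hn, ← hπp, Equiv.Perm.inv_def, Equiv.symm_apply_apply]
      have hu_ne : ∀ x, x ≠ q → u x = x := by
        intro x hx
        simp only [hu_def, Function.comp_apply]
        have hne : π x ≠ tp hn := by
          intro h; exact hx (π.injective (h.trans hπq.symm))
        rw [step_c_of_ne hn _ hne, Equiv.Perm.inv_def, Equiv.symm_apply_apply]
      set t' := fun x => if x = q then m₀ else t x with ht'_def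
      have ht'0 : t' (zz hn) = zz hn := by
        simp only [ht'_def]
        rw [if_neg (Ne.symm hq_ne)]
        exact h0
      have ht'nz : ∀ x, x ≠ zz hn → t' x ≠ zz hn := by
        intro x hx
        simp only [ht'_def]
        split_ifs with h
        · exact hm₀z
        · exact hnz x hx
      have hsub : miss hn t' ⊆ miss hn t := by
        intro x hx
        simp only [miss, Finset.mem_filter, Finset.mem_univ, true_and]
          at hx ⊢
        obtain ⟨hx1, hx2⟩ := hx
        refine ⟨hx1, fun hmem => ?_⟩
        obtain ⟨y, _, hy⟩ := Finset.mem_image.mp hmem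
        by_cases hyq : y = q
        · subst hyq
          refine hx2 (Finset.mem_image.mpr ⟨p, Finset.mem_univ p, ?_⟩)
          simp only [ht'_def]
          rw [if_neg hpq_ne, hpq_eq]
          exact hy
        · refine hx2 (Finset.mem_image.mpr ⟨y, Finset.mem_univ y, ?_⟩)
          simp only [ht'_def]
          rw [if_neg hyq]
          exact hy
      have hm₀t' : m₀ ∉ miss hn t' := by
        simp only [miss, Finset.mem_filter, Finset.mem_univ, true_and,
          not_and, not_not]
        intro _
        refine Finset.mem_image.mpr ⟨q, Finset.mem_univ q, ?_⟩
        simp [ht'_def]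
      have hssub : miss hn t' ⊂ miss hn t := by
        refine ⟨hsub, fun hcon => ?_⟩
        refine hm₀t' (hcon ?_)
        simp only [miss, Finset.mem_filter, Finset.mem_univ, true_and]
        exact ⟨hm₀z, hm₀i⟩
      have hcard' : (miss hn t').card ≤ m := by
        have := Finset.card_lt_card hssub
        omega
      have ht'G := ih t' ht'0 ht'nz hcard'
      have hdec : t = t' ∘ u := by
        funext x
        by_cases hx : x = q
        · subst hx
          simp only [Function.comp_apply]
          rw [hu_q]
          simp only [ht'_def]
          rw [if_neg hpq_ne]
          exact hpq_eq.symm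
        · simp only [Function.comp_apply]
          rw [hu_ne x hx]
          simp only [ht'_def]
          rw [if_neg hx]
      rw [hdec]
      exact G_comp hn huG ht'G

/-- Every transformation fixing `0` is in the transition semigroup. -/
lemma genG (hn : 3 ≤ n) (f : Fin n → Fin n) (hf : f (zz hn) = zz hn) :
    f ∈ G hn := by
  classical
  set S := Finset.univ.filter (fun q : Fin n => q ≠ zz hn ∧ f q = zz hn)
    with hSdef
  have hzS : zz hn ∉ S := by simp [hSdef]
  obtain ⟨g, hgG, hg0, hgS, hgnz, hginj⟩ := killG hn S hzS
  set t := fun y : Fin n =>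
    if h : ∃ x, (x ∉ S ∧ x ≠ zz hn) ∧ g x = y then f (Classical.choose h)
    else (if y = zz hn then zz hn else oo hn) with ht_def
  have hnwz : ¬ ∃ x, (x ∉ S ∧ x ≠ zz hn) ∧ g x = zz hn := by
    rintro ⟨x, ⟨hx1, hx2⟩, hx3⟩
    exact hgnz x hx1 hx2 hx3
  have ht0 : t (zz hn) = zz hn := by
    simp only [ht_def]
    rw [dif_neg hnwz]
    simp
  have htnz : ∀ y, y ≠ zz hn → t y ≠ zz hn := by
    intro y hy
    simp only [ht_def]
    by_cases h : ∃ x, (x ∉ S ∧ x ≠ zz hn) ∧ g x = y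
    · rw [dif_pos h]
      obtain ⟨⟨hx1, hx2⟩, _⟩ := Classical.choose_spec h
      intro hcon
      exact hx1 (Finset.mem_filter.mpr ⟨Finset.mem_univ _, hx2, hcon⟩)
    · rw [dif_neg h, if_neg hy]
      exact oo_ne_zz hn
  have htG : t ∈ G hn := fullG_aux hn (miss hn t).card t ht0 htnz le_rfl
  have hcomp : t ∘ g = f := by
    funext x
    by_cases hx : x = zz hn
    · subst hx
      simp only [Function.comp_apply]
      rw [hg0, ht0, hf]
    · by_cases hxS : x ∈ S
      · have hfx : f x = zz hn := by
          have := hxS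
          rw [hSdef] at this
          simp only [Finset.mem_filter, Finset.mem_univ, true_and] at this
          exact this.2
        simp only [Function.comp_apply]
        rw [hgS x hxS, ht0, hfx]
      · have hw : ∃ x', (x' ∉ S ∧ x' ≠ zz hn) ∧ g x' = g x :=
          ⟨x, ⟨hxS, hx⟩, rfl⟩
        simp only [Function.comp_apply, ht_def]
        rw [dif_pos hw]
        obtain ⟨⟨hc1, hc2⟩, hc3⟩ := Classical.choose_spec hw
        have : Classical.choose hw = x := hginj ⟨hc1, hc2⟩ ⟨hxS, hx⟩ hc3
        rw [this]
  rw [← hcomp]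
  exact G_comp hn hgG htG

/-- Every constant transformation is in the transition semigroup. -/
lemma constG (hn : 3 ≤ n) (v : Fin n) :
    Function.const (Fin n) v ∈ G hn := by
  have hf : (fun x : Fin n => if x = zz hn then zz hn else v) ∈ G hn :=
    genG hn _ (by simp)
  have h := G_comp hn (G_letter hn Le) hf
  have he : ((fun x : Fin n => if x = zz hn then zz hn else v) ∘
      (fun q : Fin n => step15 n hn q Le)) = Function.const (Fin n) v := by
    funext x
    simp only [Function.comp_apply, Function.const_apply]
    rw [step_e_eq hn, if_neg (oo_ne_zz hn)]
  rwa [he] at h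

end Stmt15
namespace Stmt15

variable {n : ℕ}

lemma step_zz (hn : 3 ≤ n) (l : Fin 5) (hl : l.val ≠ 4) :
    step15 n hn (zz hn) l = zz hn := by
  have h5 := l.isLt
  apply Fin.ext
  simp only [step15, zz]
  split_ifs <;> simp_all <;> omega

/-- Every word acts either fixing `0` or as a constant. -/
lemma tr_shape (hn : 3 ≤ n) (w : List (Fin 5)) :
    tr hn w (zz hn) = zz hn ∨ ∃ v, tr hn w = Function.const (Fin n) v := by
  induction w using List.reverseRecOn with
  | nil => left; rfl
  | append_singleton w l ih =>
    by_cases hl : l.val = 4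
    · right
      refine ⟨oo hn, funext fun q => ?_⟩
      rw [tr_append]
      have : l = Le := Fin.ext hl
      rw [this]
      show step15 n hn (tr hn w q) Le = oo hn
      exact step_e_eq hn _
    · rcases ih with h | ⟨v, hv⟩
      · left
        rw [tr_append, h]
        exact step_zz hn l hl
      · right
        refine ⟨step15 n hn v l, funext fun q => ?_⟩
        rw [tr_append, hv]
        rfl

lemma reach (hn : 3 ≤ n) (q : Fin n) : ∃ w, tr hn w (zz hn) = q := by
  by_cases h : q = zz hn
  · exact ⟨[], by rw [tr_nil, h]⟩
  · obtain ⟨w, _, hw⟩ := constG hn q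
    exact ⟨w, by rw [hw]; rfl⟩

lemma dist (hn : 3 ≤ n) (F : Set (Fin n)) (f₀ : Fin n) (hf₀ : f₀ ∈ F)
    (hF0 : ∀ q ∈ F, (q : ℕ) ≠ 0) (p q : Fin n) (hpq : p ≠ q) :
    ∃ v, ¬((tr hn v p ∈ F) ↔ (tr hn v q ∈ F)) := by
  have hzF : zz hn ∉ F := fun h => hF0 _ h rfl
  have hf₀z : f₀ ≠ zz hn := fun h => hzF (h ▸ hf₀)
  by_cases hp : p = zz hn
  · have hqz : q ≠ zz hn := fun h => hpq (hp.trans h.symm)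
    obtain ⟨v, _, hv⟩ := genG hn
      (fun x => if x = zz hn then zz hn else f₀) (by simp)
    refine ⟨v, ?_⟩
    rw [hv]
    simp only [hp, if_pos rfl, if_neg hqz]
    intro hiff
    exact hzF (hiff.mpr hf₀)
  · by_cases hq : q = zz hn
    · obtain ⟨v, _, hv⟩ := genG hn
        (fun x => if x = zz hn then zz hn else f₀) (by simp)
      refine ⟨v, ?_⟩
      rw [hv]
      simp only [hq, if_pos rfl, if_neg hp]
      intro hiff
      exact hzF (hiff.mp hf₀)
    · obtain ⟨v, _, hv⟩ := genG hn
        (fun x => if x = q then zz hn else if x = zz hn then zz hn else f₀)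
        (by by_cases hz : zz hn = q <;> simp [hz])
      refine ⟨v, ?_⟩
      rw [hv]
      simp only [if_pos rfl, if_neg hpq, if_neg hp]
      intro hiff
      exact hzF (hiff.mp hf₀)

end Stmt15
namespace Stmt15

variable {n : ℕ}

/-- The transition semigroup as an explicit set. -/
def TT (hn : 3 ≤ n) : Set (Fin n → Fin n) :=
  {f | f (zz hn) = zz hn ∨ ∃ v, f = Function.const (Fin n) v}

lemma TT_sub_G (hn : 3 ≤ n) {f : Fin n → Fin n} (hf : f ∈ TT hn) :
    f ∈ G hn := by
  rcases hf with h | ⟨v, rfl⟩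
  · exact genG hn f h
  · exact constG hn v

lemma card_TT (hn : 3 ≤ n) : Nat.card (TT hn) = n ^ (n - 1) + n - 1 := by
  classical
  set A : Set (Fin n → Fin n) := {f | f (zz hn) = zz hn} with hA_def
  set B : Set (Fin n → Fin n) := Set.range (fun v => Function.const (Fin n) v)
    with hB_def
  have hTT : TT hn = A ∪ B := by
    ext f
    simp only [TT, hA_def, hB_def, Set.mem_union, Set.mem_setOf_eq,
      Set.mem_range, eq_comm]
  have hconst_inj : Function.Injective (fun v : Fin n => Function.const (Fin n) v) :=
    fun v w h => congrFun h (zz hn)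
  have hA : Nat.card A = n ^ (n - 1) := by
    have e : A ≃ ({x : Fin n // x ≠ zz hn} → Fin n) :=
      { toFun := fun f x => f.1 x.1
        invFun := fun g =>
          ⟨fun x => if h : x = zz hn then zz hn else g ⟨x, h⟩, by
            show (if h : zz hn = zz hn then zz hn else _) = zz hn
            simp⟩
        left_inv := fun f => by
          apply Subtype.ext
          funext x
          by_cases h : x = zz hn
          · simp only [h, dif_pos]
            subst h
            exact (show f.1 (zz hn) = zz hn from f.2).symm
          · simp [h]
        right_inv := fun g => by
          funext x
          simp [x.2] }
    have hsub : Fintype.card {x : Fin n // x ≠ zz hn} = n - 1 := by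
      have := Fintype.card_subtype_compl (fun x : Fin n => x = zz hn)
      simp only [Fintype.card_subtype_eq, Fintype.card_fin] at this
      convert this using 2
    rw [Nat.card_congr e, Nat.card_eq_fintype_card, Fintype.card_fun, hsub,
      Fintype.card_fin]
  have hB : Nat.card B = n := by
    rw [hB_def, Nat.card_range_of_injective hconst_inj,
      Nat.card_eq_fintype_card, Fintype.card_fin]
  have hAB : A ∩ B = {Function.const (Fin n) (zz hn)} := by
    ext f
    constructor
    · rintro ⟨hfA, v, rfl⟩
      have : v = zz hn := hfA
      rw [this]
      rfl
    · rintro rfl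
      exact ⟨rfl, ⟨zz hn, rfl⟩⟩
  have key := Set.ncard_union_add_ncard_inter A B (Set.toFinite A)
    (Set.toFinite B)
  rw [hAB, Set.ncard_singleton] at key
  have h1 : Nat.card (TT hn) = (A ∪ B).ncard := by
    rw [hTT, Nat.card_coe_set_eq]
  have h2 : A.ncard = n ^ (n - 1) := by rw [← Nat.card_coe_set_eq]; exact hA
  have h3 : B.ncard = n := by rw [← Nat.card_coe_set_eq]; exact hB
  rw [h2, h3] at key
  have hn3 : 3 ≤ n := hn
  omega

end Stmt15
namespace Stmt15

variable {n : ℕ}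

lemma memL_split (hn : 3 ≤ n) (F : Set (Fin n)) (u x v : List (Fin 5)) :
    (u ++ x ++ v) ∈ {w : List (Fin 5) | tr hn w (zz hn) ∈ F} ↔
      tr hn v (tr hn x (tr hn u (zz hn))) ∈ F := by
  simp only [Set.mem_setOf_eq, tr_append]

lemma syn_eq (hn : 3 ≤ n) (F : Set (Fin n)) (f₀ : Fin n) (hf₀ : f₀ ∈ F)
    (hF0 : ∀ q ∈ F, (q : ℕ) ≠ 0) (x y : List (Fin 5))
    (h : synRel {w : List (Fin 5) | tr hn w (zz hn) ∈ F} x y) :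
    tr hn x = tr hn y := by
  funext q
  by_contra hne
  obtain ⟨u, hu⟩ := reach hn q
  obtain ⟨v, hv⟩ := dist hn F f₀ hf₀ hF0 _ _ hne
  apply hv
  have h2 := h u v
  rw [memL_split, memL_split, hu] at h2
  exact h2

lemma synCompl_eq (hn : 3 ≤ n) (F : Set (Fin n)) (f₀ : Fin n) (hf₀ : f₀ ∈ F)
    (hF0 : ∀ q ∈ F, (q : ℕ) ≠ 0) :
    synCompl {w : List (Fin 5) | tr hn w (zz hn) ∈ F} = n ^ (n - 1) + n - 1 := by
  set L := {w : List (Fin 5) | tr hn w (zz hn) ∈ F} with hL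
  let Φ : Quotient (synSetoid L) → TT hn :=
    Quotient.lift
      (fun w : {w : List (Fin 5) // w ≠ []} =>
        (⟨tr hn w.1, tr_shape hn w.1⟩ : TT hn))
      (fun x y hxy => Subtype.ext (syn_eq hn F f₀ hf₀ hF0 x.1 y.1 hxy))
  have hbij : Function.Bijective Φ := by
    constructor
    · intro q₁ q₂
      refine Quotient.inductionOn₂ q₁ q₂ ?_
      intro x y h
      apply Quotient.sound
      have htr : tr hn x.1 = tr hn y.1 := congrArg Subtype.val h
      intro u v
      rw [memL_split, memL_split, htr]
    · rintro ⟨f, hf⟩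
      obtain ⟨w, hw, htr⟩ := TT_sub_G hn hf
      exact ⟨⟦⟨w, hw⟩⟧, Subtype.ext htr⟩
  calc synCompl L = Nat.card (TT hn) := Nat.card_eq_of_bijective Φ hbij
    _ = n ^ (n - 1) + n - 1 := card_TT hn

lemma quotCompl_eq (hn : 3 ≤ n) (F : Set (Fin n)) (f₀ : Fin n) (hf₀ : f₀ ∈ F)
    (hF0 : ∀ q ∈ F, (q : ℕ) ≠ 0) :
    quotCompl {w : List (Fin 5) | tr hn w (zz hn) ∈ F} = n := by
  set L := {w : List (Fin 5) | tr hn w (zz hn) ∈ F} with hL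
  set Q : Fin n → Set (List (Fin 5)) := fun q => {x | tr hn x q ∈ F} with hQ
  have hrange : Set.range (leftQ L) = Set.range Q := by
    ext s
    constructor
    · rintro ⟨w, rfl⟩
      refine ⟨tr hn w (zz hn), ?_⟩
      ext x
      simp only [hQ, Set.mem_setOf_eq, leftQ, hL, tr_append]
    · rintro ⟨q, rfl⟩
      obtain ⟨w, hw⟩ := reach hn q
      refine ⟨w, ?_⟩
      ext x
      simp only [leftQ, hQ, Set.mem_setOf_eq, hL, tr_append, hw]
  have hinj : Function.Injective Q := by
    intro p q h
    by_contra hne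
    obtain ⟨v, hv⟩ := dist hn F f₀ hf₀ hF0 p q hne
    apply hv
    constructor
    · intro hh
      have h1 : v ∈ Q p := hh
      rw [h] at h1
      exact h1
    · intro hh
      have h1 : v ∈ Q q := hh
      rw [← h] at h1
      exact h1
  rw [quotCompl, hrange, Nat.card_range_of_injective hinj,
    Nat.card_eq_fintype_card, Fintype.card_fin]

end Stmt15

/-- For `n ≥ 3` and any non-empty set `F ⊆ {1,…,n-1}` of
final states, the automaton `𝒜_n` with states `{0,…,n-1}`, alphabet
`{a,b,c,d,e}`, initial state `0` and final states `F` is minimal, and its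
language is a left ideal with quotient complexity `n` and syntactic complexity
`n^{n-1} + n - 1`. -/
theorem stmt_15 (n : ℕ) (hn : 3 ≤ n) (F : Set (Fin n)) (hF : F.Nonempty)
    (hF0 : ∀ q ∈ F, (q : ℕ) ≠ 0) :
    let M : DFA (Fin 5) (Fin n) :=
      { step := step15 n hn, start := ⟨0, by omega⟩, accept := F }
    DFAMinimal M ∧
    IsLeftIdeal (M.accepts : Set (List (Fin 5))) ∧
    quotCompl (M.accepts : Set (List (Fin 5))) = n ∧
    synCompl (M.accepts : Set (List (Fin 5))) = n ^ (n - 1) + n - 1 := by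
  intro M
  obtain ⟨f₀, hf₀⟩ := hF
  have hM : (M.accepts : Set (List (Fin 5))) =
      {w : List (Fin 5) | Stmt15.tr hn w (Stmt15.zz hn) ∈ F} := by
    ext x
    rw [DFA.mem_accepts]
    exact Iff.rfl
  refine ⟨⟨?_, ?_⟩, ⟨?_, ?_⟩, ?_, ?_⟩
  · intro q
    obtain ⟨w, hw⟩ := Stmt15.reach hn q
    exact ⟨w, hw⟩
  · intro p q hiff
    by_contra hne
    obtain ⟨v, hv⟩ := Stmt15.dist hn F f₀ hf₀ hF0 p q hne
    exact hv (hiff v)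
  · obtain ⟨w, hw, htr⟩ := Stmt15.constG hn f₀
    refine ⟨w, ?_⟩
    rw [hM]
    show Stmt15.tr hn w (Stmt15.zz hn) ∈ F
    rw [htr]
    exact hf₀
  · rw [hM]
    ext x
    constructor
    · intro hx
      exact ⟨[], x, hx, rfl⟩
    · rintro ⟨u, v, hv, rfl⟩
      show Stmt15.tr hn (u ++ v) (Stmt15.zz hn) ∈ F
      rw [Stmt15.tr_append]
      rcases Stmt15.tr_shape hn v with h | ⟨c, hc⟩
      · exfalso
        have h1 : Stmt15.tr hn v (Stmt15.zz hn) ∈ F := hv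
        rw [h] at h1
        exact hF0 _ h1 rfl
      · have h1 : Stmt15.tr hn v (Stmt15.zz hn) ∈ F := hv
        rw [hc] at h1 ⊢
        exact h1
  · rw [hM]
    exact Stmt15.quotCompl_eq hn F f₀ hf₀ hF0
  · rw [hM]
    exact Stmt15.synCompl_eq hn F f₀ hf₀ hF0
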